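/- Let a,b,c,d ∈ ℚ with ad − bc ≠ 0, and suppose a² + b² = c² + d² and ac + bd = 0 (i.e., the matrix η = (a b; c d) satisfies ηηᵗ = (a²+b²)·I). If there exists (x₀,y₀,z₀) ∈ ℚ³ with (x₀,y₀,z₀) ≠ (0,0,0) and y₀² = (a(z₀² − x₀²) + 2bx₀z₀)² + (c(z₀² − x₀²) + 2dx₀z₀)², then there exists λ ∈ ℚ with λ ≠ 0 and λ² = a² + b², and every (x,y,z) ∈ ℚ³ satisfying y² = (a(z² − x²) + 2bxz)² + (c(z² − x²) + 2dxz)² satisfies y = λ(x² + z²) or y = −λ(x² + z²). -/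
import Mathlib


theorem stmt_5 (a b c d : ℚ) (hdet : a * d - b * c ≠ 0)
    (hnorm : a ^ 2 + b ^ 2 = c ^ 2 + d ^ 2) (horth : a * c + b * d = 0)
    (x₀ y₀ z₀ : ℚ) (hne : (x₀, y₀, z₀) ≠ (0, 0, 0))
    (heq : y₀ ^ 2 = (a * (z₀ ^ 2 - x₀ ^ 2) + 2 * b * x₀ * z₀) ^ 2 +
      (c * (z₀ ^ 2 - x₀ ^ 2) + 2 * d * x₀ * z₀) ^ 2) :
    ∃ l : ℚ, l ≠ 0 ∧ l ^ 2 = a ^ 2 + b ^ 2 ∧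
      ∀ x y z : ℚ, y ^ 2 = (a * (z ^ 2 - x ^ 2) + 2 * b * x * z) ^ 2 +
          (c * (z ^ 2 - x ^ 2) + 2 * d * x * z) ^ 2 →
        y = l * (x ^ 2 + z ^ 2) ∨ y = -(l * (x ^ 2 + z ^ 2)) := by
  have hk : a ^ 2 + b ^ 2 ≠ 0 := by
    intro h
    have ha : a = 0 := by nlinarith [sq_nonneg a, sq_nonneg b]
    have hb : b = 0 := by nlinarith [sq_nonneg a, sq_nonneg b]
    apply hdet; rw [ha, hb]; ring
  have h1 : (a ^ 2 + b ^ 2) * (c ^ 2 - b ^ 2) = 0 := by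
    linear_combination (a * c - b * d) * horth - b ^ 2 * hnorm
  have hc2 : c ^ 2 = b ^ 2 := by
    rcases mul_eq_zero.mp h1 with h | h
    · exact absurd h hk
    · linarith
  have hd2 : d ^ 2 = a ^ 2 := by linarith
  have h2 : (a * b + c * d) * (a * d - b * c) = 0 := by
    linear_combination (a ^ 2 - b ^ 2) * horth + a * c * hd2 - b * d * hc2
  have hab : a * b + c * d = 0 := by
    rcases mul_eq_zero.mp h2 with h | h
    · exact h
    · exact absurd h hdet
  have key : ∀ x z : ℚ, (a * (z ^ 2 - x ^ 2) + 2 * b * x * z) ^ 2 +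
      (c * (z ^ 2 - x ^ 2) + 2 * d * x * z) ^ 2 = (a ^ 2 + b ^ 2) * (x ^ 2 + z ^ 2) ^ 2 := by
    intro x z
    linear_combination (z ^ 2 - x ^ 2) ^ 2 * hc2 + (2 * x * z) ^ 2 * hd2 +
      2 * (z ^ 2 - x ^ 2) * (2 * x * z) * hab
  have hs : x₀ ^ 2 + z₀ ^ 2 ≠ 0 := by
    intro h
    have hx : x₀ = 0 := by nlinarith [sq_nonneg x₀, sq_nonneg z₀]
    have hz : z₀ = 0 := by nlinarith [sq_nonneg x₀, sq_nonneg z₀]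
    have hy : y₀ = 0 := by
      have := heq
      rw [hx, hz] at this
      nlinarith [this]
    exact hne (by rw [hx, hy, hz])
  have hl2 : (y₀ / (x₀ ^ 2 + z₀ ^ 2)) ^ 2 = a ^ 2 + b ^ 2 := by
    rw [key] at heq
    field_simp
    linear_combination heq
  refine ⟨y₀ / (x₀ ^ 2 + z₀ ^ 2), ?_, hl2, ?_⟩
  · intro h
    rw [h] at hl2
    exact hk (by rw [← hl2]; ring)
  · intro x y z hxyz
    rw [key] at hxyz
    have hfac : (y - y₀ / (x₀ ^ 2 + z₀ ^ 2) * (x ^ 2 + z ^ 2)) *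
        (y + y₀ / (x₀ ^ 2 + z₀ ^ 2) * (x ^ 2 + z ^ 2)) = 0 := by
      linear_combination hxyz - (x ^ 2 + z ^ 2) ^ 2 * hl2
    rcases mul_eq_zero.mp hfac with h | h
    · left; linarith
    · right; linarith
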